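/- Let k be an integer with 1 ≤ k ≤ n, let ν_1, …, ν_k > 0, and let w_1, …, w_k ∈ ℤ^n be linearly independent vectors with w_i ∈ ν_i C⁰ for each i. For α ≥ 0 set D_α^+ = { Σ_{i=1}^k a_i w_i : a_i ∈ ℤ, 0 ≤ a_i ≤ α/ν_i } and D_α = { Σ_{i=1}^k a_i w_i : a_i ∈ ℤ, |a_i| ≤ α/ν_i }. If |D_α^+| > 2kα + 1, then for every lattice point u ∈ C ∩ ℤ^n there exists a nonzero vector v ∈ D_α with ⟨u, v⟩ = 0. -/

import Mathlib

open scoped BigOperators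
open Pointwise Metric

noncomputable section

/-- `ℝ^n` with the Euclidean structure. -/
abbrev Euc (n : ℕ) := EuclideanSpace ℝ (Fin n)

/-- A point of `ℝ^n` is a lattice point if all its coordinates are integers. -/
def IsLatticePoint {n : ℕ} (x : Euc n) : Prop := ∀ i, ∃ m : ℤ, x i = (m : ℝ)

/-- A compact convex body, symmetric about the origin, with nonempty interior. -/
def IsSymmConvexBody {n : ℕ} (C : Set (Euc n)) : Prop :=
  IsCompact C ∧ Convex ℝ C ∧ (∀ x ∈ C, -x ∈ C) ∧ (interior C).Nonempty

/-- `IsSuccMin C i l` means `l` is the `i`-th successive minimum of `C` w.r.t. `ℤ^n`: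
the least `t > 0` such that `t • C` contains `i` linearly independent lattice points. -/
def IsSuccMin {n : ℕ} (C : Set (Euc n)) (i : ℕ) (l : ℝ) : Prop :=
  IsLeast {t : ℝ | 0 < t ∧ ∃ v : Fin i → Euc n, LinearIndependent ℝ v ∧
    ∀ j, IsLatticePoint (v j) ∧ v j ∈ t • C} l

/-- A finite set of points in `ℝ^n` is in general position if no `n` of its elements
are linearly dependent. -/
def InGenPos {n : ℕ} (S : Finset (Euc n)) : Prop :=
  ∀ T ⊆ S, T.card = n →
    LinearIndependent ℝ (fun x : (T : Set (Euc n)) => (x : Euc n))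

/-- `h(C)`: the maximum cardinality of a subset of `C ∩ ℤ^n` in general position. -/
def maxGenPos {n : ℕ} (C : Set (Euc n)) : ℕ :=
  sSup {k : ℕ | ∃ S : Finset (Euc n), S.card = k ∧ ↑S ⊆ C ∧
    (∀ x ∈ S, IsLatticePoint x) ∧ InGenPos S}

/-- `g(C)`: the minimum number of proper linear subspaces covering `C ∩ ℤ^n`. -/
def coverNum {n : ℕ} (C : Set (Euc n)) : ℕ :=
  sInf {k : ℕ | ∃ F : Finset (Submodule ℝ (Euc n)), F.card = k ∧
    (∀ H ∈ F, H ≠ ⊤) ∧ ∀ x ∈ C, IsLatticePoint x → ∃ H ∈ F, x ∈ H}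

/-- The polar body `C⁰ = {x : ⟨u,x⟩ ≤ 1 for all u ∈ C}`. -/
def polarBody {n : ℕ} (C : Set (Euc n)) : Set (Euc n) :=
  {x | ∀ u ∈ C, inner ℝ u x ≤ (1 : ℝ)}

/-- With `w_i ∈ ν_i C⁰` linearly independent integer vectors, if
`|D_α⁺| > 2kα + 1` then every lattice point `u ∈ C` is orthogonal to a nonzero element
of `D_α`. -/
theorem perp_vector_in_D_alpha (n : ℕ) (hn : 2 ≤ n)
    (C : Set (Euc n)) (hC : IsSymmConvexBody C)
    (k : ℕ) (hk1 : 1 ≤ k) (hkn : k ≤ n)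
    (ν : Fin k → ℝ) (hν : ∀ i, 0 < ν i)
    (w : Fin k → Euc n) (hw : LinearIndependent ℝ w)
    (hwlat : ∀ i, IsLatticePoint (w i)) (hwpol : ∀ i, w i ∈ ν i • polarBody C)
    (α : ℝ) (hα : 0 ≤ α)
    (hcard : 2 * (k : ℝ) * α + 1 <
      (({y : Euc n | ∃ a : Fin k → ℤ, (∀ i, 0 ≤ a i ∧ (a i : ℝ) ≤ α / ν i) ∧
          y = ∑ i, (a i : ℝ) • w i}).ncard : ℝ)) :
    ∀ u ∈ C, IsLatticePoint u →
      ∃ v ∈ {y : Euc n | ∃ a : Fin k → ℤ, (∀ i, |(a i : ℝ)| ≤ α / ν i) ∧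
          y = ∑ i, (a i : ℝ) • w i},
        v ≠ 0 ∧ inner ℝ u v = (0 : ℝ) := by
  intro u hu hulat
  classical
  set Dp := {y : Euc n | ∃ a : Fin k → ℤ, (∀ i, 0 ≤ a i ∧ (a i : ℝ) ≤ α / ν i) ∧
      y = ∑ i, (a i : ℝ) • w i} with hDp
  have hfin : Dp.Finite := by
    by_contra h
    rw [Set.Infinite.ncard h] at hcard
    have h0 : (0:ℝ) ≤ 2 * (k:ℝ) * α := by positivity
    norm_num at hcard
    linarith
  -- bound on inner products with the w i
  have hbound : ∀ i, |(inner ℝ u (w i) : ℝ)| ≤ ν i := by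
    intro i
    obtain ⟨x, hx, hxw⟩ := hwpol i
    have h1 : (inner ℝ u x : ℝ) ≤ 1 := hx u hu
    have h2 : (inner ℝ (-u) x : ℝ) ≤ 1 := hx (-u) (hC.2.2.1 u hu)
    rw [inner_neg_left] at h2
    rw [← hxw, real_inner_smul_right, abs_le]
    have hν' := (hν i).le
    constructor <;> nlinarith
  -- integrality of inner products
  have hint : ∀ i, ∃ m : ℤ, (inner ℝ u (w i) : ℝ) = m := by
    intro i
    choose mu hmu using hulat
    choose mw hmw using hwlat i
    refine ⟨∑ j, mu j * mw j, ?_⟩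
    rw [PiLp.inner_apply]
    push_cast
    refine Finset.sum_congr rfl fun j _ => ?_
    rw [hmu j, hmw j]
    simp [mul_comm]
  choose q hq using hint
  have habsq : ∀ i, |(q i : ℝ)| ≤ ν i := fun i => (hq i) ▸ hbound i
  -- inner product with a combination
  have hinner : ∀ (a : Fin k → ℤ),
      (inner ℝ u (∑ i, (a i : ℝ) • w i) : ℝ) = ((∑ i, a i * q i : ℤ) : ℝ) := by
    intro a
    rw [inner_sum]
    push_cast
    exact Finset.sum_congr rfl fun i _ => by rw [real_inner_smul_right, hq]
  set M : ℤ := ⌊(k:ℝ) * α⌋ with hM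
  have hkα : (0:ℝ) ≤ (k:ℝ) * α := by positivity
  have key : ∀ a : Fin k → ℤ, (∀ i, 0 ≤ a i ∧ (a i : ℝ) ≤ α / ν i) →
      |∑ i, a i * q i| ≤ M := by
    intro a ha
    rw [Int.le_floor]
    push_cast
    calc |∑ i, (a i : ℝ) * (q i : ℝ)| ≤ ∑ i, |(a i : ℝ) * (q i : ℝ)| :=
          Finset.abs_sum_le_sum_abs _ _
      _ ≤ ∑ _i : Fin k, α := by
          refine Finset.sum_le_sum fun i _ => ?_
          rw [abs_mul]
          have h1 : |(a i : ℝ)| ≤ α / ν i := by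
            rw [abs_of_nonneg (by exact_mod_cast (ha i).1)]; exact (ha i).2
          calc |(a i : ℝ)| * |(q i : ℝ)| ≤ (α / ν i) * ν i := by
                exact mul_le_mul h1 (habsq i) (abs_nonneg _)
                  (div_nonneg hα (hν i).le)
            _ = α := div_mul_cancel₀ α (hν i).ne'
      _ = (k:ℝ) * α := by rw [Finset.sum_const]; simp [mul_comm]
  -- pigeonhole
  set S := hfin.toFinset with hS
  have hM0 : 0 ≤ M := Int.floor_nonneg.2 hkα
  have hScard : 2 * M.toNat + 1 < S.card := by
    have h1 : S.card = Dp.ncard := (Set.ncard_eq_toFinset_card Dp hfin).symm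
    have hMle : (M.toNat : ℝ) ≤ (k:ℝ) * α := by
      have h2 : ((M.toNat : ℤ) : ℝ) ≤ (k:ℝ) * α := by
        rw [Int.toNat_of_nonneg hM0]
        exact Int.floor_le _
      exact_mod_cast h2
    have h3 : (2 * M.toNat + 1 : ℝ) < S.card := by
      rw [h1]; push_cast; linarith
    exact_mod_cast h3
  have hT : (Finset.Icc (-M) M).card = 2 * M.toNat + 1 := by
    rw [Int.card_Icc]
    omega
  have hmaps : ∀ v ∈ S, round (inner ℝ u v : ℝ) ∈ Finset.Icc (-M) M := by
    intro v hv
    rw [hS, Set.Finite.mem_toFinset] at hv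
    obtain ⟨a, ha, hva⟩ := hv
    have : (inner ℝ u v : ℝ) = ((∑ i, a i * q i : ℤ) : ℝ) := by rw [hva, hinner]
    rw [this, round_intCast, Finset.mem_Icc, ← abs_le]
    exact key a ha
  obtain ⟨v₁, hv₁, v₂, hv₂, hne, heq⟩ :=
    Finset.exists_ne_map_eq_of_card_lt_of_maps_to (by rw [hT]; exact hScard) hmaps
  rw [hS, Set.Finite.mem_toFinset] at hv₁ hv₂
  obtain ⟨a₁, ha₁, hva₁⟩ := hv₁
  obtain ⟨a₂, ha₂, hva₂⟩ := hv₂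
  have hiv₁ : (inner ℝ u v₁ : ℝ) = ((∑ i, a₁ i * q i : ℤ) : ℝ) := by rw [hva₁, hinner]
  have hiv₂ : (inner ℝ u v₂ : ℝ) = ((∑ i, a₂ i * q i : ℤ) : ℝ) := by rw [hva₂, hinner]
  have hinneq : (inner ℝ u v₁ : ℝ) = (inner ℝ u v₂ : ℝ) := by
    rw [hiv₁, hiv₂] at heq ⊢
    rw [round_intCast, round_intCast] at heq
    exact_mod_cast heq
  refine ⟨v₁ - v₂, ⟨fun i => a₁ i - a₂ i, fun i => ?_, ?_⟩, sub_ne_zero.2 hne, ?_⟩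
  · have h10 : (0:ℝ) ≤ (a₁ i : ℝ) := by exact_mod_cast (ha₁ i).1
    have h20 : (0:ℝ) ≤ (a₂ i : ℝ) := by exact_mod_cast (ha₂ i).1
    have h11 := (ha₁ i).2
    have h21 := (ha₂ i).2
    push_cast
    rw [abs_le]
    constructor <;> linarith
  · rw [hva₁, hva₂, ← Finset.sum_sub_distrib]
    refine Finset.sum_congr rfl fun i _ => ?_
    push_cast
    rw [sub_smul]
  · rw [inner_sub_right, hinneq, sub_self]
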